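/- Let V₁ and V₂ be commuting isometries on a complex Hilbert space H such that V := V₁V₂ is pure (i.e., ‖(V*)ⁿh‖ → 0 for every h ∈ H), let C := I − V₁V₁* − V₂V₂* + VV*, W₁ := ker V₁*, and F₂ := P_{W₁}V₂P_{W₁}. Then the following conditions are equivalent: (i) C ≥ 0 (C is a positive operator); (ii) V₂(W₁) ⊆ W₁; (iii) V₁*V₂ = V₂V₁* (the pair is doubly commuting); (iv) C is an orthogonal projection (C is self-adjoint and C² = C); (v) F₂*F₂ = P_{W₁}. -/

import Mathlib

open ContinuousLinearMap
open scoped InnerProductSpace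

set_option maxHeartbeats 2000000 in
/-- Let `V₁, V₂` be commuting isometries on a complex Hilbert space such that
`V := V₁V₂` is pure, `C := I − V₁V₁* − V₂V₂* + VV*`, `W₁ := ker V₁*`, and
`F₂ := P_{W₁}V₂P_{W₁}`. Then the following are equivalent: (i) `C ≥ 0`; (ii) `V₂(W₁) ⊆ W₁`;
(iii) `V₁*V₂ = V₂V₁*`; (iv) `C` is an orthogonal projection; (v) `F₂*F₂ = P_{W₁}`. -/
theorem stmt8 {H : Type*} [NormedAddCommGroup H] [InnerProductSpace ℂ H] [CompleteSpace H]
    (V₁ V₂ : H →L[ℂ] H)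
    (hV₁ : adjoint V₁ ∘L V₁ = 1) (hV₂ : adjoint V₂ ∘L V₂ = 1)
    (hcomm : V₁ ∘L V₂ = V₂ ∘L V₁)
    (hpure : ∀ h : H, Filter.Tendsto
      (fun n : ℕ => ‖((adjoint (V₁ ∘L V₂)) ^ n) h‖) Filter.atTop (nhds 0))
    (C F₂ : H →L[ℂ] H)
    (hC : C = 1 - V₁ ∘L adjoint V₁ - V₂ ∘L adjoint V₂
        + (V₁ ∘L V₂) ∘L adjoint (V₁ ∘L V₂))
    (hF₂ : F₂ = (1 - V₁ ∘L adjoint V₁) ∘L (V₂ ∘L (1 - V₁ ∘L adjoint V₁))) :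
    List.TFAE
      [C.IsPositive,
       Submodule.map (V₂ : H →ₗ[ℂ] H) (LinearMap.ker (adjoint V₁ : H →ₗ[ℂ] H)) ≤ LinearMap.ker (adjoint V₁ : H →ₗ[ℂ] H),
       adjoint V₁ ∘L V₂ = V₂ ∘L adjoint V₁,
       IsSelfAdjoint C ∧ C ∘L C = C,
       adjoint F₂ ∘L F₂ = 1 - V₁ ∘L adjoint V₁] := by
  have a1 : ∀ x : H, adjoint V₁ (V₁ x) = x := fun x => by
    simpa using DFunLike.congr_fun hV₁ x
  have a2 : ∀ x : H, adjoint V₂ (V₂ x) = x := fun x => by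
    simpa using DFunLike.congr_fun hV₂ x
  have hcm : ∀ x : H, V₁ (V₂ x) = V₂ (V₁ x) := fun x => by
    simpa using DFunLike.congr_fun hcomm x
  have hacomm : adjoint V₂ ∘L adjoint V₁ = adjoint V₁ ∘L adjoint V₂ := by
    have h := congrArg ContinuousLinearMap.adjoint hcomm
    rwa [adjoint_comp, adjoint_comp] at h
  have hacm : ∀ x : H, adjoint V₂ (adjoint V₁ x) = adjoint V₁ (adjoint V₂ x) := fun x => by
    simpa using DFunLike.congr_fun hacomm x
  have hadj1 : ContinuousLinearMap.adjoint (1 : H →L[ℂ] H) = 1 := by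
    rw [← star_eq_adjoint, star_one]
  have hCsa : IsSelfAdjoint C := by
    rw [isSelfAdjoint_iff', hC]
    simp only [map_add, map_sub, adjoint_comp, adjoint_adjoint, hadj1]
  tfae_have 2 → 3 := by
    intro h2
    ext x
    have hr : adjoint V₁ (x - V₁ (adjoint V₁ x)) = 0 := by simp [map_sub, a1]
    have h2r : adjoint V₁ (V₂ (x - V₁ (adjoint V₁ x))) = 0 :=
      LinearMap.mem_ker.1 (h2 (Submodule.mem_map_of_mem (LinearMap.mem_ker.2 hr)))
    have hx : x = V₁ (adjoint V₁ x) + (x - V₁ (adjoint V₁ x)) := by abel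
    simp only [comp_apply]
    conv_lhs => rw [hx]
    rw [map_add, map_add, h2r, add_zero, ← hcm, a1]
  tfae_have 3 → 4 := by
    intro h3
    have h3p : ∀ x : H, adjoint V₁ (V₂ x) = V₂ (adjoint V₁ x) := fun x => by
      simpa using DFunLike.congr_fun h3 x
    have h3' : adjoint V₂ ∘L V₁ = V₁ ∘L adjoint V₂ := by
      have h := congrArg ContinuousLinearMap.adjoint h3
      simp only [adjoint_comp, adjoint_adjoint] at h
      exact h
    have h3'p : ∀ x : H, adjoint V₂ (V₁ x) = V₁ (adjoint V₂ x) := fun x => by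
      simpa using DFunLike.congr_fun h3' x
    refine ⟨hCsa, ?_⟩
    ext x
    simp only [hC, comp_apply, sub_apply, add_apply, one_apply_eq_self, adjoint_comp, map_sub, map_add,
      a1, a2, hcm, hacm, h3p, h3'p]
    abel
  tfae_have 3 → 5 := by
    intro h3
    have h3p : ∀ x : H, adjoint V₁ (V₂ x) = V₂ (adjoint V₁ x) := fun x => by
      simpa using DFunLike.congr_fun h3 x
    have h3' : adjoint V₂ ∘L V₁ = V₁ ∘L adjoint V₂ := by
      have h := congrArg ContinuousLinearMap.adjoint h3
      simp only [adjoint_comp, adjoint_adjoint] at h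
      exact h
    have h3'p : ∀ x : H, adjoint V₂ (V₁ x) = V₁ (adjoint V₂ x) := fun x => by
      simpa using DFunLike.congr_fun h3' x
    rw [hF₂]
    ext x
    simp only [adjoint_comp, map_sub, hadj1, adjoint_adjoint, comp_apply, sub_apply, one_apply_eq_self,
      map_sub, map_add, a1, a2, hcm, hacm, h3p, h3'p]
    abel
  tfae_have 5 → 2 := by
    intro h5
    intro y hy
    simp only [Submodule.mem_map, LinearMap.mem_ker, ContinuousLinearMap.coe_coe] at hy
    obtain ⟨w, hw, rfl⟩ := hy
    simp only [LinearMap.mem_ker, ContinuousLinearMap.coe_coe]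
    obtain ⟨b, hb⟩ : ∃ b : H, b = adjoint V₁ (V₂ w) := ⟨_, rfl⟩
    rw [← hb]
    have hFw : F₂ w = V₂ w - V₁ b := by
      rw [hF₂]
      simp [comp_apply, sub_apply, one_apply, map_sub, hw, ← hb]
    have h5w : adjoint F₂ (F₂ w) = w := by
      have h := DFunLike.congr_fun h5 w
      simpa [comp_apply, sub_apply, one_apply, hw] using h
    have key := adjoint_inner_left F₂ w (F₂ w)
    rw [h5w] at key
    have e1 : ⟪V₂ w, V₂ w⟫_ℂ = ⟪w, w⟫_ℂ := by
      rw [← adjoint_inner_right V₂ w (V₂ w), a2]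
    have e2 : ⟪V₁ b, V₁ b⟫_ℂ = ⟪b, b⟫_ℂ := by
      rw [← adjoint_inner_right V₁ b (V₁ b), a1]
    have e3 : ⟪V₂ w, V₁ b⟫_ℂ = ⟪b, b⟫_ℂ := by
      rw [← adjoint_inner_left V₁ b (V₂ w), ← hb]
    have e4 : ⟪V₁ b, V₂ w⟫_ℂ = ⟪b, b⟫_ℂ := by
      rw [← adjoint_inner_right V₁ b (V₂ w), ← hb]
    have hexp : ⟪F₂ w, F₂ w⟫_ℂ = ⟪w, w⟫_ℂ - ⟪b, b⟫_ℂ := by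
      rw [hFw, inner_sub_left, inner_sub_right, inner_sub_right, e1, e2, e3, e4]
      ring
    have hb0 : ⟪b, b⟫_ℂ = 0 := by
      have h := key.trans hexp
      exact sub_eq_self.mp h.symm
    exact inner_self_eq_zero.mp hb0
  tfae_have 4 → 1 := by
    rintro ⟨hsa, hid⟩
    refine ⟨ContinuousLinearMap.isSelfAdjoint_iff_isSymmetric.mp hsa, fun x => ?_⟩
    have hadj := isSelfAdjoint_iff'.mp hsa
    have hCC : C (C x) = C x := by
      have h := DFunLike.congr_fun hid x
      simpa using h
    have h1 : ⟪C x, x⟫_ℂ = ⟪C x, C x⟫_ℂ := by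
      calc ⟪C x, x⟫_ℂ = ⟪C (C x), x⟫_ℂ := by rw [hCC]
        _ = ⟪adjoint C (C x), x⟫_ℂ := by rw [hadj]
        _ = ⟪C x, C x⟫_ℂ := adjoint_inner_left C x (C x)
    rw [ContinuousLinearMap.reApplyInnerSelf_apply, h1]
    exact inner_self_nonneg
  tfae_have 1 → 2 := by
    intro h1
    intro y hy
    simp only [Submodule.mem_map, LinearMap.mem_ker, ContinuousLinearMap.coe_coe] at hy
    obtain ⟨w, hw, rfl⟩ := hy
    simp only [LinearMap.mem_ker, ContinuousLinearMap.coe_coe]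
    obtain ⟨g, hg⟩ : ∃ g : H, g = adjoint V₁ (V₂ w) := ⟨_, rfl⟩
    rw [← hg]
    obtain ⟨v, hv⟩ : ∃ v : H, v = adjoint V₂ (V₁ g) := ⟨_, rfl⟩
    obtain ⟨d, hd⟩ : ∃ d : H, d = v - V₁ (adjoint V₁ v) := ⟨_, rfl⟩
    have hA : adjoint V₂ g = adjoint V₁ v := by
      rw [hv, ← hacm, a1]
    have t1 : C (V₁ g) = V₁ (V₂ (adjoint V₁ v)) - V₂ v := by
      rw [hC]
      simp only [comp_apply, sub_apply, add_apply, one_apply_eq_self, adjoint_comp, a1, hA, ← hv]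
      abel
    have t2 : ⟪C (V₁ g), V₁ g⟫_ℂ = ⟪adjoint V₁ v, adjoint V₁ v⟫_ℂ - ⟪v, v⟫_ℂ := by
      rw [t1, inner_sub_left]
      congr 1
      · calc ⟪V₁ (V₂ (adjoint V₁ v)), V₁ g⟫_ℂ
            = ⟪V₂ (adjoint V₁ v), adjoint V₁ (V₁ g)⟫_ℂ :=
              (adjoint_inner_right V₁ (V₂ (adjoint V₁ v)) (V₁ g)).symm
          _ = ⟪V₂ (adjoint V₁ v), g⟫_ℂ := by rw [a1]
          _ = ⟪adjoint V₁ v, adjoint V₂ g⟫_ℂ :=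
              (adjoint_inner_right V₂ (adjoint V₁ v) g).symm
          _ = ⟪adjoint V₁ v, adjoint V₁ v⟫_ℂ := by rw [hA]
      · calc ⟪V₂ v, V₁ g⟫_ℂ = ⟪v, adjoint V₂ (V₁ g)⟫_ℂ :=
              (adjoint_inner_right V₂ v (V₁ g)).symm
          _ = ⟪v, v⟫_ℂ := by rw [← hv]
    have hpos := h1.2 (V₁ g)
    rw [ContinuousLinearMap.reApplyInnerSelf_apply, t2] at hpos
    have hd0 : adjoint V₁ d = 0 := by rw [hd]; simp [map_sub, a1]
    have hpyth : ⟪v, v⟫_ℂ = ⟪adjoint V₁ v, adjoint V₁ v⟫_ℂ + ⟪d, d⟫_ℂ := by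
      have hsplit : v = V₁ (adjoint V₁ v) + d := by rw [hd]; abel
      have c1 : ⟪V₁ (adjoint V₁ v), d⟫_ℂ = 0 := by
        rw [← adjoint_inner_right V₁ (adjoint V₁ v) d, hd0, inner_zero_right]
      have c2 : ⟪d, V₁ (adjoint V₁ v)⟫_ℂ = 0 := by
        rw [← adjoint_inner_left V₁ (adjoint V₁ v) d, hd0, inner_zero_left]
      have c3 : ⟪V₁ (adjoint V₁ v), V₁ (adjoint V₁ v)⟫_ℂ
          = ⟪adjoint V₁ v, adjoint V₁ v⟫_ℂ := by
        rw [← adjoint_inner_right V₁ (adjoint V₁ v) (V₁ (adjoint V₁ v)), a1]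
      calc ⟪v, v⟫_ℂ = ⟪V₁ (adjoint V₁ v) + d, V₁ (adjoint V₁ v) + d⟫_ℂ := by rw [← hsplit]
        _ = ⟪adjoint V₁ v, adjoint V₁ v⟫_ℂ + ⟪d, d⟫_ℂ := by
            rw [inner_add_left, inner_add_right, inner_add_right, c1, c2, c3]
            ring
    rw [hpyth] at hpos
    have hdd : RCLike.re (⟪d, d⟫_ℂ) = 0 := by
      have h' : RCLike.re (⟪adjoint V₁ v, adjoint V₁ v⟫_ℂ
          - (⟪adjoint V₁ v, adjoint V₁ v⟫_ℂ + ⟪d, d⟫_ℂ)) = -RCLike.re (⟪d, d⟫_ℂ) := by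
        rw [map_sub, map_add]; ring
      rw [h'] at hpos
      have h'' := inner_self_nonneg (𝕜 := ℂ) (x := d)
      linarith
    have hd' : d = 0 := by
      have hn : ‖d‖ ^ 2 = 0 := by rw [← inner_self_eq_norm_sq (𝕜 := ℂ) d, hdd]
      simpa using pow_eq_zero_iff (n := 2) (by norm_num) |>.mp hn
    have hv1 : v = V₁ (adjoint V₁ v) := by
      rw [hd] at hd'
      exact sub_eq_zero.mp hd'
    have hgg : ⟪g, g⟫_ℂ = 0 := by
      calc ⟪g, g⟫_ℂ = ⟪adjoint V₁ (V₂ w), g⟫_ℂ := by rw [← hg]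
        _ = ⟪V₂ w, V₁ g⟫_ℂ := adjoint_inner_left V₁ g (V₂ w)
        _ = ⟪w, adjoint V₂ (V₁ g)⟫_ℂ := (adjoint_inner_right V₂ w (V₁ g)).symm
        _ = ⟪w, V₁ (adjoint V₁ v)⟫_ℂ := by conv_lhs => rw [← hv, hv1]
        _ = ⟪adjoint V₁ w, adjoint V₁ v⟫_ℂ := (adjoint_inner_left V₁ (adjoint V₁ v) w).symm
        _ = 0 := by rw [hw, inner_zero_left]
    exact inner_self_eq_zero.mp hgg
  tfae_finish
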